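/- Let U(x) = Σ_{k=1}^N Γ_k(y) w^k where Γ_1,…,Γ_N are C¹ scalar functions of the 2-plane radial variables y. Then curl U = Σ_{1 ≤ k < ℓ ≤ N} (∂_ℓΓ_k/y_ℓ − ∂_kΓ_ℓ/y_k)[w^k ⊗ w^ℓ − w^ℓ ⊗ w^k], and consequently curl U ≡ 0 if and only if ∂_ℓΓ_k/y_ℓ − ∂_kΓ_ℓ/y_k ≡ 0 for all 1 ≤ k < ℓ ≤ N. -/

import Mathlib

open scoped BigOperators
open Matrix

noncomputable section

/-- Partial derivative `∂g/∂x_j` of a scalar field on `ℝᵐ`. -/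
def pdx {m : ℕ} (g : (Fin m → ℝ) → ℝ) (x : Fin m → ℝ) (j : Fin m) : ℝ :=
  fderiv ℝ g x (Pi.single j 1)

/-- Gradient of a scalar field on `ℝᵐ`. -/
def gradx {m : ℕ} (g : (Fin m → ℝ) → ℝ) (x : Fin m → ℝ) : Fin m → ℝ :=
  fun j => pdx g x j

/-- Gradient matrix `∇u`, with entries `(∇u)_{ij} = ∂u_i/∂x_j`. -/
def gradm {n : ℕ} (u : (Fin n → ℝ) → Fin n → ℝ) (x : Fin n → ℝ) :
    Matrix (Fin n) (Fin n) ℝ :=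
  Matrix.of fun i j => pdx (fun z => u z i) x j

/-- Laplacian of a scalar field. -/
def lapx {m : ℕ} (g : (Fin m → ℝ) → ℝ) (x : Fin m → ℝ) : ℝ :=
  ∑ j, pdx (fun z => pdx g z j) x j

/-- Hessian matrix of a scalar field. -/
def hessx {m : ℕ} (g : (Fin m → ℝ) → ℝ) (x : Fin m → ℝ) : Matrix (Fin m) (Fin m) ℝ :=
  Matrix.of fun i j => pdx (fun z => pdx g z j) x i

/-- Componentwise Laplacian of a vector field. -/
def lapv {n : ℕ} (u : (Fin n → ℝ) → Fin n → ℝ) (x : Fin n → ℝ) : Fin n → ℝ :=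
  fun i => lapx (fun z => u z i) x

/-- Squared Euclidean norm of a vector. -/
def norm2 {m : ℕ} (v : Fin m → ℝ) : ℝ := ∑ i, v i ^ 2

/-- Euclidean norm of a vector. -/
def enr {m : ℕ} (v : Fin m → ℝ) : ℝ := Real.sqrt (norm2 v)

/-- Squared Frobenius norm of a matrix, `|E|² = tr (EᵗE)`. -/
def frob2 {n : ℕ} (M : Matrix (Fin n) (Fin n) ℝ) : ℝ := ∑ i, ∑ j, M i j ^ 2

/-- The 2-plane radial variables `y = (y_1, …, y_N)`, `N = ⌈n/2⌉` (0-indexed):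
`y_ℓ = √(x_{2ℓ}² + x_{2ℓ+1}²)` and, when `n` is odd, `y_{N-1} = x_{n-1}`. -/
def yvar {n : ℕ} (x : Fin n → ℝ) (ℓ : Fin ((n+1)/2)) : ℝ :=
  if h : 2 * (ℓ : ℕ) + 1 < n then
    Real.sqrt (x ⟨2*(ℓ:ℕ), by omega⟩ ^ 2 + x ⟨2*(ℓ:ℕ)+1, h⟩ ^ 2)
  else x ⟨n - 1, by have := ℓ.isLt; omega⟩

/-- The vector of 2-plane radial variables of `x`. -/
def yv {n : ℕ} (x : Fin n → ℝ) : Fin ((n+1)/2) → ℝ := fun ℓ => yvar x ℓ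

/-- Inclusion `Fin (n/2) → Fin ((n+1)/2)`, i.e. `d = ⌊n/2⌋` into `N = ⌈n/2⌉`. -/
def dIdx {n : ℕ} (i : Fin (n/2)) : Fin ((n+1)/2) := ⟨(i:ℕ), by have := i.isLt; omega⟩

/-- Partial derivative `∂_ℓ M` of a matrix field on `ℝᴺ`. -/
def pdM {n N : ℕ} (M : (Fin N → ℝ) → Matrix (Fin n) (Fin n) ℝ)
    (y : Fin N → ℝ) (ℓ : Fin N) : Matrix (Fin n) (Fin n) ℝ :=
  Matrix.of fun i j => pdx (fun z => M z i j) y ℓ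

/-- Second partial derivative `∂²_{ℓk} M` of a matrix field on `ℝᴺ`. -/
def pdM2 {n N : ℕ} (M : (Fin N → ℝ) → Matrix (Fin n) (Fin n) ℝ)
    (y : Fin N → ℝ) (ℓ k : Fin N) : Matrix (Fin n) (Fin n) ℝ :=
  Matrix.of fun i j => pdx (fun z => pdM M z ℓ i j) y k

/-- The block diagonal `SO(n)`-valued matrix field `Q[f]`, with `2×2` rotation blocks
`R[f_ℓ(y)]` (and an extra diagonal `1` when `n` is odd). -/
def Qf {n : ℕ} (f : (Fin ((n+1)/2) → ℝ) → Fin (n/2) → ℝ)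
    (y : Fin ((n+1)/2) → ℝ) : Matrix (Fin n) (Fin n) ℝ :=
  Matrix.of fun i j =>
    if h : (i:ℕ)/2 = (j:ℕ)/2 ∧ (i:ℕ)/2 < n/2 then
      (if (i:ℕ) % 2 = 0 then
        (if (j:ℕ) % 2 = 0 then Real.cos (f y ⟨(i:ℕ)/2, h.2⟩)
         else -Real.sin (f y ⟨(i:ℕ)/2, h.2⟩))
       else
        (if (j:ℕ) % 2 = 0 then Real.sin (f y ⟨(i:ℕ)/2, h.2⟩)
         else Real.cos (f y ⟨(i:ℕ)/2, h.2⟩)))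
    else (if i = j then 1 else 0)

/-- The block diagonal rotation matrix `exp(α𝐇) = diag(R[α], …, R[α])`
(an extra diagonal `1` when `n` is odd). -/
def rotM (n : ℕ) (α : ℝ) : Matrix (Fin n) (Fin n) ℝ :=
  Matrix.of fun i j =>
    if (i:ℕ)/2 = (j:ℕ)/2 ∧ (i:ℕ)/2 < n/2 then
      (if (i:ℕ) % 2 = 0 then
        (if (j:ℕ) % 2 = 0 then Real.cos α else -Real.sin α)
       else
        (if (j:ℕ) % 2 = 0 then Real.sin α else Real.cos α))
    else (if i = j then 1 else 0)

/-- The vector `w^k = (0, …, 0, x_{2k}, x_{2k+1}, 0, …, 0)`. -/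
def wv {n : ℕ} (x : Fin n → ℝ) (k : Fin ((n+1)/2)) : Fin n → ℝ :=
  fun j => if (j:ℕ)/2 = (k:ℕ) then x j else 0

/-- The vector `[w^k]^⊥ = (0, …, 0, -x_{2k+1}, x_{2k}, 0, …, 0)` (zero in the odd last slot). -/
def wperp {n : ℕ} (x : Fin n → ℝ) (k : Fin ((n+1)/2)) : Fin n → ℝ :=
  fun j =>
    if h : (j:ℕ)/2 = (k:ℕ) ∧ 2*(k:ℕ)+1 < n then
      (if (j:ℕ) % 2 = 0 then -x ⟨2*(k:ℕ)+1, h.2⟩ else x ⟨2*(k:ℕ), by omega⟩)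
    else 0

/-- The differential operator
`𝓛[u;A,B] = [∇u]ᵗ[∇u]∇A + A [∇u]ᵗΔu + B [∇u]ᵗu`, where `A, B` are evaluated at
`(|x|, |u|², |∇u|²)` and `∇A` is the spatial gradient of `x ↦ A(|x|,|u(x)|²,|∇u(x)|²)`. -/
def LAB {n : ℕ} (A B : ℝ → ℝ → ℝ → ℝ) (u : (Fin n → ℝ) → Fin n → ℝ)
    (x : Fin n → ℝ) : Fin n → ℝ :=
  ((gradm u x)ᵀ * gradm u x) *ᵥ
      gradx (fun z => A (enr z) (norm2 (u z)) (frob2 (gradm u z))) x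
    + A (enr x) (norm2 (u x)) (frob2 (gradm u x)) • ((gradm u x)ᵀ *ᵥ lapv u x)
    + B (enr x) (norm2 (u x)) (frob2 (gradm u x)) • ((gradm u x)ᵀ *ᵥ u x)

/-- The annulus `𝕏ₙ = {x : a < |x| < b}` in `ℝⁿ`. -/
def Xann (n : ℕ) (a b : ℝ) : Set (Fin n → ℝ) := {x | a < enr x ∧ enr x < b}

/-- The region `𝔸ₙ = {y : a < ‖y‖ < b}` (with the 2-plane radial coordinates positive). -/
def Ann (n : ℕ) (a b : ℝ) : Set (Fin ((n+1)/2) → ℝ) :=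
  {y | a < enr y ∧ enr y < b ∧ ∀ ℓ : Fin ((n+1)/2), 2*(ℓ:ℕ)+1 < n → 0 < y ℓ}

/-- `𝒥(y) = y_1 ⋯ y_d`. -/
def Jac (n : ℕ) (y : Fin ((n+1)/2) → ℝ) : ℝ :=
  ∏ ℓ : Fin ((n+1)/2), if 2*(ℓ:ℕ)+1 < n then y ℓ else 1

/-- The argument `ξ = n + Σ_j y_j² |∇f_j|²`. -/
def xiArg (n : ℕ) (f : (Fin ((n+1)/2) → ℝ) → Fin (n/2) → ℝ)
    (y : Fin ((n+1)/2) → ℝ) : ℝ :=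
  (n : ℝ) + ∑ j : Fin (n/2), (y (dIdx j))^2 * norm2 (gradx (fun z => f z j) y)

/-- The coefficients `𝒜_i(y,∇f) = y_i² A(z, z², n + Σ_j y_j²|∇f_j|²) 𝒥(y)`, `z = ‖y‖`. -/
def coefA (n : ℕ) (A : ℝ → ℝ → ℝ → ℝ) (f : (Fin ((n+1)/2) → ℝ) → Fin (n/2) → ℝ)
    (i : Fin (n/2)) (y : Fin ((n+1)/2) → ℝ) : ℝ :=
  (y (dIdx i))^2 * A (enr y) ((enr y)^2) (xiArg n f y) * Jac n y

/-- `div [𝒜_i(y,∇f) ∇f_i]`, divergence taken in the `y` variables. -/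
def divA (n : ℕ) (A : ℝ → ℝ → ℝ → ℝ) (f : (Fin ((n+1)/2) → ℝ) → Fin (n/2) → ℝ)
    (i : Fin (n/2)) (y : Fin ((n+1)/2) → ℝ) : ℝ :=
  ∑ k, pdx (fun z => coefA n A f i z * pdx (fun w => f w i) z k) y k

/-- The curl of a vector field, `[curl U]_{ij} = ∂_j U_i − ∂_i U_j`. -/
def curlm {n : ℕ} (U : (Fin n → ℝ) → Fin n → ℝ) (x : Fin n → ℝ) :
    Matrix (Fin n) (Fin n) ℝ :=
  Matrix.of fun i j => pdx (fun z => U z i) x j - pdx (fun z => U z j) x i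

end

section Aux

private lemma half_lt {n : ℕ} (i : Fin n) : (i : ℕ) / 2 < (n + 1) / 2 := by
  have := i.isLt; omega

private lemma yvar_deriv {n : ℕ} (x : Fin n → ℝ) (ℓ : Fin ((n+1)/2)) (hℓ : 0 < yvar x ℓ) :
    ∃ L : (Fin n → ℝ) →L[ℝ] ℝ, HasFDerivAt (fun z => yvar z ℓ) L x ∧
      ∀ j : Fin n, L (Pi.single j 1) =
        if (j : ℕ) / 2 = (ℓ : ℕ) then x j / yvar x ℓ else 0 := by
  by_cases h : 2 * (ℓ : ℕ) + 1 < n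
  · set a : Fin n := ⟨2 * (ℓ : ℕ), by omega⟩ with hadef
    set b : Fin n := ⟨2 * (ℓ : ℕ) + 1, h⟩ with hbdef
    have hfun : (fun z : Fin n → ℝ => yvar z ℓ)
        = fun z => Real.sqrt (z a * z a + z b * z b) := by
      funext z
      simp only [yvar, dif_pos h]
      rw [pow_two, pow_two]
    have hyx : yvar x ℓ = Real.sqrt (x a * x a + x b * x b) := congrFun hfun x
    have hq0 : 0 < x a * x a + x b * x b := by
      have := hℓ
      rw [hyx] at this
      exact Real.sqrt_pos.mp this
    have hda := hasFDerivAt_apply (𝕜 := ℝ) a x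
    have hdb := hasFDerivAt_apply (𝕜 := ℝ) b x
    have hq := (hda.mul hda).add (hdb.mul hdb)
    have hs := hq.sqrt (ne_of_gt hq0)
    refine ⟨_, by rw [hfun]; exact hs, fun j => ?_⟩
    have hne : a ≠ b := by simp [Fin.ext_iff, hadef, hbdef]
    have hval : ∀ c : Fin n, (Pi.single j 1 : Fin n → ℝ) c = if c = j then 1 else 0 := by
      intro c; rw [Pi.single_apply]
    simp only [ContinuousLinearMap.smul_apply, ContinuousLinearMap.add_apply,
      ContinuousLinearMap.proj_apply, smul_eq_mul, hval]
    have hsqrt_ne : Real.sqrt (x a * x a + x b * x b) ≠ 0 :=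
      ne_of_gt (Real.sqrt_pos.mpr hq0)
    by_cases hj : (j : ℕ) / 2 = (ℓ : ℕ)
    · rw [if_pos hj, hyx]
      have hj2 : (j : ℕ) = 2 * (ℓ : ℕ) ∨ (j : ℕ) = 2 * (ℓ : ℕ) + 1 := by
        have := j.isLt; omega
      rcases hj2 with hj2 | hj2
      · have hja : a = j := by simp [Fin.ext_iff, hadef, hj2]
        have hjb : ¬ (b = j) := by simp [Fin.ext_iff, hbdef]; omega
        rw [if_pos hja, if_neg hjb]
        have hxj : x j = x a := by rw [hja]
        rw [hxj]
        field_simp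
        simp only [Pi.add_apply, Pi.pow_apply, Pi.mul_apply]
        rw [pow_two, pow_two]
        ring
      · have hja : ¬ (a = j) := by simp [Fin.ext_iff, hadef]; omega
        have hjb : b = j := by simp [Fin.ext_iff, hbdef, hj2]
        rw [if_neg hja, if_pos hjb]
        have hxj : x j = x b := by rw [hjb]
        rw [hxj]
        field_simp
        simp only [Pi.add_apply, Pi.pow_apply, Pi.mul_apply]
        rw [pow_two, pow_two]
        ring
    · rw [if_neg hj]
      have hja : ¬ (a = j) := by simp [Fin.ext_iff, hadef]; omega
      have hjb : ¬ (b = j) := by simp [Fin.ext_iff, hbdef]; omega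
      rw [if_neg hja, if_neg hjb]
      ring
  · have hlt := ℓ.isLt
    set c : Fin n := ⟨n - 1, by omega⟩ with hcdef
    have hfun : (fun z : Fin n → ℝ => yvar z ℓ) = fun z => z c := by
      funext z
      simp only [yvar, dif_neg h]
      rfl
    have hyx : yvar x ℓ = x c := congrFun hfun x
    refine ⟨ContinuousLinearMap.proj c, by rw [hfun]; exact hasFDerivAt_apply c x, fun j => ?_⟩
    have hxc : x c ≠ 0 := ne_of_gt (hyx ▸ hℓ)
    simp only [ContinuousLinearMap.proj_apply]
    by_cases hj : (j : ℕ) / 2 = (ℓ : ℕ)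
    · have hjc : j = c := by
        have := j.isLt
        simp only [Fin.ext_iff, hcdef]
        omega
      rw [if_pos hj, hjc, hyx, Pi.single_eq_same, div_self hxc]
    · have hjc : ¬ (c = j) := by
        simp only [Fin.ext_iff, hcdef]
        have := j.isLt
        omega
      rw [if_neg hj, Pi.single_apply, if_neg hjc]

private lemma sum_pairs {n : ℕ} (g : Fin n → ℝ) :
    ∑ i, g i = ∑ ℓ : Fin ((n+1)/2),
      (if h : 2 * (ℓ : ℕ) + 1 < n then g ⟨2 * (ℓ : ℕ), by omega⟩ + g ⟨2 * (ℓ : ℕ) + 1, h⟩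
       else g ⟨n - 1, by have := ℓ.isLt; omega⟩) := by
  rw [← Finset.sum_fiberwise_of_maps_to
    (g := fun i : Fin n => (⟨(i : ℕ) / 2, half_lt i⟩ : Fin ((n+1)/2)))
    (t := Finset.univ) (fun i _ => Finset.mem_univ _) g]
  refine Finset.sum_congr rfl fun ℓ _ => ?_
  by_cases h : 2 * (ℓ : ℕ) + 1 < n
  · rw [dif_pos h]
    have hset : (Finset.univ.filter
          fun i : Fin n => (⟨(i : ℕ) / 2, half_lt i⟩ : Fin ((n+1)/2)) = ℓ)
        = {(⟨2 * (ℓ : ℕ), by omega⟩ : Fin n), ⟨2 * (ℓ : ℕ) + 1, h⟩} := by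
      ext i
      simp only [Finset.mem_filter, Finset.mem_univ, true_and, Finset.mem_insert,
        Finset.mem_singleton, Fin.ext_iff]
      omega
    rw [hset, Finset.sum_pair (by simp [Fin.ext_iff])]
  · rw [dif_neg h]
    have hlt := ℓ.isLt
    have hset : (Finset.univ.filter
          fun i : Fin n => (⟨(i : ℕ) / 2, half_lt i⟩ : Fin ((n+1)/2)) = ℓ)
        = {(⟨n - 1, by omega⟩ : Fin n)} := by
      ext i
      simp only [Finset.mem_filter, Finset.mem_univ, true_and, Finset.mem_singleton,
        Fin.ext_iff]
      omega
    rw [hset, Finset.sum_singleton]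

private lemma norm2_yv {n : ℕ} (x : Fin n → ℝ) : norm2 (yv x) = norm2 x := by
  rw [norm2, norm2, sum_pairs (fun i => x i ^ 2)]
  refine Finset.sum_congr rfl fun ℓ _ => ?_
  by_cases h : 2 * (ℓ : ℕ) + 1 < n
  · rw [dif_pos h]
    simp only [yv, yvar, dif_pos h]
    exact Real.sq_sqrt (by positivity)
  · rw [dif_neg h]
    simp only [yv, yvar, dif_neg h]

private lemma enr_yv {n : ℕ} (x : Fin n → ℝ) : enr (yv x) = enr x := by
  rw [enr, enr, norm2_yv]

end Aux

section Aux2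

private lemma fvmk {n a : ℕ} (h : a < n) : ((⟨a, h⟩ : Fin n) : ℕ) = a := rfl

private lemma pdxU {n : ℕ} (Γ : Fin ((n+1)/2) → (Fin ((n+1)/2) → ℝ) → ℝ)
    (hΓ : ∀ k, ContDiff ℝ 1 (Γ k)) (x : Fin n → ℝ) (hpos : ∀ ℓ, 0 < yvar x ℓ)
    (i j : Fin n) :
    pdx (fun z => (∑ k, Γ k (yv z) • wv z k) i) x j
      = Γ ⟨(i : ℕ) / 2, half_lt i⟩ (yv x) * (if i = j then 1 else 0)
        + x i * (x j / yvar x ⟨(j : ℕ) / 2, half_lt j⟩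
            * pdx (Γ ⟨(i : ℕ) / 2, half_lt i⟩) (yv x) ⟨(j : ℕ) / 2, half_lt j⟩) := by
  set k0 : Fin ((n+1)/2) := ⟨(i : ℕ) / 2, half_lt i⟩ with hk0
  set l0 : Fin ((n+1)/2) := ⟨(j : ℕ) / 2, half_lt j⟩ with hl0
  have hU : (fun z : Fin n → ℝ => (∑ k, Γ k (yv z) • wv z k) i)
      = fun z => Γ k0 (yv z) * z i := by
    funext z
    simp only [Finset.sum_apply, Pi.smul_apply, smul_eq_mul, wv]
    rw [Finset.sum_eq_single k0]
    · rw [if_pos rfl]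
    · intro k _ hk
      rw [if_neg, mul_zero]
      exact fun hh => hk (Fin.ext hh.symm)
    · intro habs; exact absurd (Finset.mem_univ _) habs
  choose L hL hLval using fun ℓ => yvar_deriv x ℓ (hpos ℓ)
  have hyv : HasFDerivAt (yv (n := n)) (ContinuousLinearMap.pi L) x := by
    apply hasFDerivAt_pi''
    intro ℓ
    rw [ContinuousLinearMap.proj_pi]
    exact hL ℓ
  have hΓd : HasFDerivAt (Γ k0) (fderiv ℝ (Γ k0) (yv x)) (yv x) :=
    (((hΓ k0).differentiable one_ne_zero) (yv x)).hasFDerivAt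
  have hcomp := hΓd.comp x hyv
  have hproj := hasFDerivAt_apply (𝕜 := ℝ) i x
  have hmul : HasFDerivAt (fun z : Fin n → ℝ => Γ k0 (yv z) * z i)
      (Γ k0 (yv x) • ContinuousLinearMap.proj i
        + x i • ((fderiv ℝ (Γ k0) (yv x)).comp (ContinuousLinearMap.pi L))) x :=
    hcomp.mul hproj
  rw [pdx, hU, hmul.fderiv]
  have hsingle : (ContinuousLinearMap.pi L) (Pi.single j 1)
      = Pi.single l0 (x j / yvar x l0) := by
    funext m
    rw [ContinuousLinearMap.pi_apply, hLval m j, Pi.single_apply]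
    by_cases hc : m = l0
    · subst hc
      rw [if_pos rfl, if_pos rfl]
    · rw [if_neg, if_neg hc]
      exact fun hh => hc (Fin.ext hh.symm)
  have hsm : Pi.single l0 (x j / yvar x l0)
      = (x j / yvar x l0) • (Pi.single l0 1 : Fin ((n+1)/2) → ℝ) := by
    funext m
    rw [Pi.single_apply, Pi.smul_apply, Pi.single_apply]
    by_cases hm : m = l0 <;> simp [hm]
  simp only [ContinuousLinearMap.add_apply, ContinuousLinearMap.smul_apply,
    ContinuousLinearMap.coe_comp', Function.comp_apply, ContinuousLinearMap.proj_apply,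
    smul_eq_mul]
  rw [hsingle, hsm, ContinuousLinearMap.map_smul]
  have hji : (Pi.single j 1 : Fin n → ℝ) i = if i = j then 1 else 0 := Pi.single_apply j 1 i
  rw [hji]
  simp only [pdx, smul_eq_mul]

private lemma curl_entry {n : ℕ} (Γ : Fin ((n+1)/2) → (Fin ((n+1)/2) → ℝ) → ℝ)
    (hΓ : ∀ k, ContDiff ℝ 1 (Γ k)) (x : Fin n → ℝ) (hpos : ∀ ℓ, 0 < yvar x ℓ)
    (i j : Fin n) :
    curlm (fun z => ∑ k, Γ k (yv z) • wv z k) x i j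
      = (pdx (Γ ⟨(i : ℕ) / 2, half_lt i⟩) (yv x) ⟨(j : ℕ) / 2, half_lt j⟩
            / yvar x ⟨(j : ℕ) / 2, half_lt j⟩
         - pdx (Γ ⟨(j : ℕ) / 2, half_lt j⟩) (yv x) ⟨(i : ℕ) / 2, half_lt i⟩
            / yvar x ⟨(i : ℕ) / 2, half_lt i⟩) * (x i * x j) := by
  have h1 := pdxU Γ hΓ x hpos i j
  have h2 := pdxU Γ hΓ x hpos j i
  show pdx (fun z => (∑ k, Γ k (yv z) • wv z k) i) x j
      - pdx (fun z => (∑ k, Γ k (yv z) • wv z k) j) x i = _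
  rw [h1, h2]
  rcases eq_or_ne i j with hij | hij
  · subst hij
    rw [sub_self, sub_self, zero_mul]
  · rw [if_neg hij, if_neg (Ne.symm hij)]
    ring

end Aux2

/-- Remark 4.6: for `U(x) = Σ_k Γ_k(y) w^k` with scalar `C¹`
coefficients `Γ_k` of the 2-plane radial variables,
`curl U = Σ_{k<ℓ} (∂_ℓΓ_k/y_ℓ − ∂_kΓ_ℓ/y_k)[w^k ⊗ w^ℓ − w^ℓ ⊗ w^k]`, and consequently
`curl U ≡ 0` iff `∂_ℓΓ_k/y_ℓ − ∂_kΓ_ℓ/y_k ≡ 0` for all `k < ℓ`. -/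
theorem stmt14 (n : ℕ) (hn : 2 ≤ n) (a b : ℝ) (ha : 0 < a) (hab : a < b)
    (Γ : Fin ((n+1)/2) → (Fin ((n+1)/2) → ℝ) → ℝ)
    (hΓ : ∀ k, ContDiff ℝ 1 (Γ k)) :
    let U : (Fin n → ℝ) → Fin n → ℝ := fun z => ∑ k, Γ k (yv z) • wv z k
    let P : Set (Fin n → ℝ) :=
      {x | a < enr x ∧ enr x < b ∧ ∀ ℓ : Fin ((n+1)/2), 0 < yvar x ℓ}
    (∀ x ∈ P, curlm U x
      = ∑ k : Fin ((n+1)/2), ∑ ℓ : Fin ((n+1)/2), if (k:ℕ) < (ℓ:ℕ) then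
          (pdx (Γ k) (yv x) ℓ / yvar x ℓ - pdx (Γ ℓ) (yv x) k / yvar x k) •
            (vecMulVec (wv x k) (wv x ℓ) - vecMulVec (wv x ℓ) (wv x k))
        else 0) ∧
    ((∀ x ∈ P, curlm U x = 0) ↔
      (∀ y : Fin ((n+1)/2) → ℝ,
        (a < enr y ∧ enr y < b ∧ ∀ ℓ, 0 < y ℓ) →
        ∀ k ℓ : Fin ((n+1)/2), (k:ℕ) < (ℓ:ℕ) →
          pdx (Γ k) y ℓ / y ℓ - pdx (Γ ℓ) y k / y k = 0)) := by
  intro U P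
  have hUdef : U = fun z => ∑ k, Γ k (yv z) • wv z k := rfl
  have hPdef : P = {x | a < enr x ∧ enr x < b ∧ ∀ ℓ : Fin ((n+1)/2), 0 < yvar x ℓ} := rfl
  have hmem : ∀ x : Fin n → ℝ, x ∈ P ↔
      (a < enr x ∧ enr x < b ∧ ∀ ℓ : Fin ((n+1)/2), 0 < yvar x ℓ) := fun x => Iff.rfl
  constructor
  · intro x hx
    obtain ⟨hax, hxb, hpos⟩ := (hmem x).mp hx
    rw [hUdef]
    ext i j
    rw [curl_entry Γ hΓ x hpos i j]
    simp only [Matrix.sum_apply]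
    have hterm : ∀ k ℓ : Fin ((n+1)/2),
        (if (k : ℕ) < (ℓ : ℕ) then
          (pdx (Γ k) (yv x) ℓ / yvar x ℓ - pdx (Γ ℓ) (yv x) k / yvar x k) •
            (vecMulVec (wv x k) (wv x ℓ) - vecMulVec (wv x ℓ) (wv x k))
        else 0) i j
        = (if (k : ℕ) < (ℓ : ℕ) then
          (pdx (Γ k) (yv x) ℓ / yvar x ℓ - pdx (Γ ℓ) (yv x) k / yvar x k) *
            ((if (i : ℕ)/2 = (k : ℕ) then x i else 0) * (if (j : ℕ)/2 = (ℓ : ℕ) then x j else 0)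
             - (if (i : ℕ)/2 = (ℓ : ℕ) then x i else 0) * (if (j : ℕ)/2 = (k : ℕ) then x j else 0))
        else 0) := by
      intro k ℓ
      split
      · simp [Matrix.smul_apply, Matrix.sub_apply, Matrix.vecMulVec_apply, smul_eq_mul, wv]
      · simp
    rw [Finset.sum_congr rfl (fun k _ => Finset.sum_congr rfl (fun ℓ _ => hterm k ℓ))]
    rcases Nat.lt_trichotomy ((i : ℕ)/2) ((j : ℕ)/2) with hlt | heq | hgt
    · rw [Finset.sum_eq_single (⟨(i : ℕ)/2, half_lt i⟩ : Fin ((n+1)/2))]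
      rotate_left
      · intro k _ hk
        refine Finset.sum_eq_zero fun ℓ _ => ?_
        split
        case isTrue hkl =>
          have hA : ¬((i : ℕ)/2 = (k : ℕ)) := fun hh => hk (Fin.ext hh.symm)
          by_cases h3 : (i : ℕ)/2 = (ℓ : ℕ)
          · have hB : ¬((j : ℕ)/2 = (k : ℕ)) := by omega
            simp [hA, hB]
          · simp [hA, h3]
        case isFalse => rfl
      · intro h; exact absurd (Finset.mem_univ _) h
      rw [Finset.sum_eq_single (⟨(j : ℕ)/2, half_lt j⟩ : Fin ((n+1)/2))]
      rotate_left
      · intro ℓ _ hl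
        split
        case isTrue hkl =>
          have hA : ¬((j : ℕ)/2 = (ℓ : ℕ)) := fun hh => hl (Fin.ext hh.symm)
          have hB : ¬((j : ℕ)/2 = (i : ℕ)/2) := by omega
          simp [fvmk, hA, hB]
        case isFalse => rfl
      · intro h; exact absurd (Finset.mem_univ _) h
      have hB : ¬((i : ℕ)/2 = (j : ℕ)/2) := by omega
      simp [fvmk, hlt, hB]
    · have hfe : (⟨(i : ℕ)/2, half_lt i⟩ : Fin ((n+1)/2)) = ⟨(j : ℕ)/2, half_lt j⟩ :=
        Fin.ext heq
      have hz : ∀ k : Fin ((n+1)/2), ∀ ℓ : Fin ((n+1)/2),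
          (if (k : ℕ) < (ℓ : ℕ) then
            (pdx (Γ k) (yv x) ℓ / yvar x ℓ - pdx (Γ ℓ) (yv x) k / yvar x k) *
              ((if (i : ℕ)/2 = (k : ℕ) then x i else 0) * (if (j : ℕ)/2 = (ℓ : ℕ) then x j else 0)
               - (if (i : ℕ)/2 = (ℓ : ℕ) then x i else 0) * (if (j : ℕ)/2 = (k : ℕ) then x j else 0))
          else 0) = 0 := by
        intro k ℓ
        split
        case isTrue hkl =>
          by_cases h1 : (i : ℕ)/2 = (k : ℕ) <;> by_cases h3 : (i : ℕ)/2 = (ℓ : ℕ)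
          · exfalso; omega
          · have hB : ¬((j : ℕ)/2 = (ℓ : ℕ)) := by omega
            simp [hB, h3]
          · have hB : ¬((j : ℕ)/2 = (k : ℕ)) := by omega
            simp [h1, hB]
          · simp [h1, h3]
        case isFalse => rfl
      rw [Finset.sum_eq_zero (fun k _ => Finset.sum_eq_zero (fun ℓ _ => hz k ℓ)), hfe,
        sub_self, zero_mul]
    · rw [Finset.sum_eq_single (⟨(j : ℕ)/2, half_lt j⟩ : Fin ((n+1)/2))]
      rotate_left
      · intro k _ hk
        refine Finset.sum_eq_zero fun ℓ _ => ?_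
        split
        case isTrue hkl =>
          have hB : ¬((j : ℕ)/2 = (k : ℕ)) := fun hh => hk (Fin.ext hh.symm)
          by_cases h1 : (i : ℕ)/2 = (k : ℕ)
          · have hA : ¬((j : ℕ)/2 = (ℓ : ℕ)) := by omega
            simp [hA, hB]
          · simp [h1, hB]
        case isFalse => rfl
      · intro h; exact absurd (Finset.mem_univ _) h
      rw [Finset.sum_eq_single (⟨(i : ℕ)/2, half_lt i⟩ : Fin ((n+1)/2))]
      rotate_left
      · intro ℓ _ hl
        split
        case isTrue hkl =>
          have hA : ¬((i : ℕ)/2 = (j : ℕ)/2) := by omega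
          have hB : ¬((i : ℕ)/2 = (ℓ : ℕ)) := fun hh => hl (Fin.ext hh.symm)
          simp [fvmk, hA, hB]
        case isFalse => rfl
      · intro h; exact absurd (Finset.mem_univ _) h
      have hA : ¬((i : ℕ)/2 = (j : ℕ)/2) := by omega
      simp only [fvmk]
      rw [if_pos hgt, if_neg hA, zero_mul]
      simp only [if_true]
      ring
  · constructor
    · intro h0 y hy k ℓ hkl
      have h2k : 2 * (k : ℕ) < n := by have := ℓ.isLt; omega
      have h2l : 2 * (ℓ : ℕ) < n := by have := ℓ.isLt; omega
      set x : Fin n → ℝ := fun m => if (m : ℕ) % 2 = 0 then y ⟨(m : ℕ)/2, half_lt m⟩ else 0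
        with hxdef
      have hyvx : ∀ m : Fin ((n+1)/2), yvar x m = y m := by
        intro m
        by_cases h : 2 * (m : ℕ) + 1 < n
        · simp only [yvar, dif_pos h]
          have e1 : x ⟨2 * (m : ℕ), by omega⟩ = y m := by
            simp only [hxdef, fvmk]
            rw [if_pos (by omega)]
            exact congrArg y (Fin.ext (by simp only [fvmk]; omega))
          have e2 : x ⟨2 * (m : ℕ) + 1, h⟩ = 0 := by
            simp only [hxdef, fvmk]
            rw [if_neg (by omega)]
          rw [e1, e2]
          rw [show (0:ℝ) ^ 2 = 0 by norm_num, add_zero]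
          exact Real.sqrt_sq (le_of_lt (hy.2.2 m))
        · simp only [yvar, dif_neg h]
          have hm := m.isLt
          simp only [hxdef, fvmk]
          rw [if_pos (by omega)]
          exact congrArg y (Fin.ext (by simp only [fvmk]; omega))
      have hyv_eq : yv x = y := funext hyvx
      have henr : enr x = enr y := by rw [← enr_yv x, hyv_eq]
      have hpos : ∀ m, 0 < yvar x m := fun m => by rw [hyvx m]; exact hy.2.2 m
      have hxP : x ∈ P := (hmem x).mpr
        ⟨by rw [henr]; exact hy.1, by rw [henr]; exact hy.2.1, hpos⟩
      have hc := h0 x hxP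
      rw [hUdef] at hc
      set i : Fin n := ⟨2 * (k : ℕ), h2k⟩ with hidef
      set jj : Fin n := ⟨2 * (ℓ : ℕ), h2l⟩ with hjdef
      have hentry := congrFun (congrFun hc i) jj
      rw [curl_entry Γ hΓ x hpos i jj] at hentry
      simp only [Matrix.zero_apply] at hentry
      have hik : (⟨(i : ℕ)/2, half_lt i⟩ : Fin ((n+1)/2)) = k :=
        Fin.ext (by simp only [hidef, fvmk]; omega)
      have hjl : (⟨(jj : ℕ)/2, half_lt jj⟩ : Fin ((n+1)/2)) = ℓ :=
        Fin.ext (by simp only [hjdef, fvmk]; omega)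
      rw [hik, hjl, hyv_eq, hyvx k, hyvx ℓ] at hentry
      have hxi : x i = y k := by
        simp only [hidef, hxdef, fvmk]
        rw [if_pos (by omega)]
        exact congrArg y (Fin.ext (by simp only [fvmk]; omega))
      have hxj : x jj = y ℓ := by
        simp only [hjdef, hxdef, fvmk]
        rw [if_pos (by omega)]
        exact congrArg y (Fin.ext (by simp only [fvmk]; omega))
      rw [hxi, hxj] at hentry
      rcases mul_eq_zero.mp hentry with h | h
      · exact h
      · exact absurd h (mul_ne_zero (ne_of_gt (hy.2.2 k)) (ne_of_gt (hy.2.2 ℓ)))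
    · intro hcoef x hx
      obtain ⟨hax, hxb, hpos⟩ := (hmem x).mp hx
      have hc := hcoef (yv x)
        ⟨by rw [enr_yv]; exact hax, by rw [enr_yv]; exact hxb, fun m => hpos m⟩
      rw [hUdef]
      ext i j
      rw [curl_entry Γ hΓ x hpos i j]
      simp only [Matrix.zero_apply]
      rcases Nat.lt_trichotomy ((i : ℕ)/2) ((j : ℕ)/2) with hlt | heq | hgt
      · have h0 : pdx (Γ ⟨(i : ℕ)/2, half_lt i⟩) (yv x) ⟨(j : ℕ)/2, half_lt j⟩
              / yvar x ⟨(j : ℕ)/2, half_lt j⟩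
            - pdx (Γ ⟨(j : ℕ)/2, half_lt j⟩) (yv x) ⟨(i : ℕ)/2, half_lt i⟩
              / yvar x ⟨(i : ℕ)/2, half_lt i⟩ = 0 :=
          hc ⟨(i : ℕ)/2, half_lt i⟩ ⟨(j : ℕ)/2, half_lt j⟩ hlt
        rw [h0, zero_mul]
      · have hfe : (⟨(i : ℕ)/2, half_lt i⟩ : Fin ((n+1)/2)) = ⟨(j : ℕ)/2, half_lt j⟩ :=
          Fin.ext heq
        rw [hfe, sub_self, zero_mul]
      · have h0 : pdx (Γ ⟨(j : ℕ)/2, half_lt j⟩) (yv x) ⟨(i : ℕ)/2, half_lt i⟩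
              / yvar x ⟨(i : ℕ)/2, half_lt i⟩
            - pdx (Γ ⟨(i : ℕ)/2, half_lt i⟩) (yv x) ⟨(j : ℕ)/2, half_lt j⟩
              / yvar x ⟨(j : ℕ)/2, half_lt j⟩ = 0 :=
          hc ⟨(j : ℕ)/2, half_lt j⟩ ⟨(i : ℕ)/2, half_lt i⟩ hgt
        have h1 : pdx (Γ ⟨(i : ℕ)/2, half_lt i⟩) (yv x) ⟨(j : ℕ)/2, half_lt j⟩
              / yvar x ⟨(j : ℕ)/2, half_lt j⟩
            - pdx (Γ ⟨(j : ℕ)/2, half_lt j⟩) (yv x) ⟨(i : ℕ)/2, half_lt i⟩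
              / yvar x ⟨(i : ℕ)/2, half_lt i⟩ = 0 := by linarith
        rw [h1, zero_mul]
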